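/- arXiv:2504.04122 — 2 statements merged into one kernel-verified Lean document; each statement's English description precedes it below -/
import Mathlib

section
/- Let x_1,...,x_n ∈ ℝ^d be distinct and suppose index l and coordinate k satisfy x_l^{(k)} ≤ x_j^{(k)} for all j ≠ l with strict inequality for some j. Then the matrix ∂L(x)/∂x_l^{(k)} (the entrywise partial derivative of the weighted Laplacian with sigmoid weights) is symmetric, positive semi-definite, and nonzero. -/
open Matrix

noncomputable def sigmoid (w y : ℝ) : ℝ := 1 / (1 + Real.exp (-w * y))

noncomputable def sigmoidDeriv (w y : ℝ) : ℝ := w * sigmoid w y * (1 - sigmoid w y)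

/-- Entrywise partial derivative of the weighted adjacency matrix with respect to the `k`-th
coordinate of node `l`. -/
noncomputable def dAdj {n d : ℕ} (w ε : ℝ) (x : Fin n → EuclideanSpace ℝ (Fin d))
    (l : Fin n) (k : Fin d) : Matrix (Fin n) (Fin n) ℝ :=
  fun i j =>
    if i = j then 0
    else if i = l then
      -sigmoidDeriv w (ε - ‖x l - x j‖) * (x l k - x j k) / ‖x l - x j‖
    else if j = l then
      -sigmoidDeriv w (ε - ‖x l - x i‖) * (x l k - x i k) / ‖x l - x i‖
    else 0

/-- Entrywise partial derivative of the weighted Laplacian. -/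
noncomputable def dLap {n d : ℕ} (w ε : ℝ) (x : Fin n → EuclideanSpace ℝ (Fin d))
    (l : Fin n) (k : Fin d) : Matrix (Fin n) (Fin n) ℝ :=
  Matrix.diagonal (fun i => ∑ j, dAdj w ε x l k i j) - dAdj w ε x l k

lemma sigmoid_pos (w y : ℝ) : 0 < sigmoid w y := by
  unfold sigmoid; positivity

lemma sigmoid_lt_one (w y : ℝ) : sigmoid w y < 1 := by
  unfold sigmoid
  rw [div_lt_one (by positivity)]
  linarith [Real.exp_pos (-w * y)]

lemma sigmoidDeriv_pos {w : ℝ} (hw : 0 < w) (y : ℝ) : 0 < sigmoidDeriv w y := by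
  unfold sigmoidDeriv
  exact mul_pos (mul_pos hw (sigmoid_pos w y)) (by linarith [sigmoid_lt_one w y])

lemma dAdj_symm {n d : ℕ} (w ε : ℝ) (x : Fin n → EuclideanSpace ℝ (Fin d))
    (l : Fin n) (k : Fin d) (i j : Fin n) : dAdj w ε x l k i j = dAdj w ε x l k j i := by
  unfold dAdj
  rcases eq_or_ne i j with h | h
  · simp [h]
  · simp only [h, h.symm, if_false]
    rcases eq_or_ne i l with hi | hi <;> rcases eq_or_ne j l with hj | hj <;>
      simp [hi, hj, h, h.symm]

lemma dAdj_nonneg {n d : ℕ} {w : ℝ} (ε : ℝ) {x : Fin n → EuclideanSpace ℝ (Fin d)}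
    {l : Fin n} {k : Fin d} (hw : 0 < w)
    (hmin : ∀ j, j ≠ l → x l k ≤ x j k) (i j : Fin n) : 0 ≤ dAdj w ε x l k i j := by
  unfold dAdj
  have key : ∀ m : Fin n, m ≠ l →
      0 ≤ -sigmoidDeriv w (ε - ‖x l - x m‖) * (x l k - x m k) / ‖x l - x m‖ := by
    intro m hm
    apply div_nonneg _ (norm_nonneg _)
    have h1 := sigmoidDeriv_pos hw (ε - ‖x l - x m‖)
    have h2 := hmin m hm
    nlinarith
  rcases eq_or_ne i j with h | h
  · simp [h]
  · simp only [h, if_false]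
    rcases eq_or_ne i l with hi | hi
    · subst hi; simpa using key j (Ne.symm h)
    · simp only [hi, if_false]
      rcases eq_or_ne j l with hj | hj
      · subst hj; simpa using key i hi
      · simp [hj]

/-- if `x l` is coordinate-`k` minimal among the distinct points, strictly for some
point, then `∂L(x)/∂x_l^{(k)}` is symmetric, positive semi-definite, and nonzero. -/
theorem stmt9 {n d : ℕ} (hn : 2 ≤ n) (w ε : ℝ) (hw : 0 < w) (hε : 0 < ε)
    (x : Fin n → EuclideanSpace ℝ (Fin d)) (hx : Function.Injective x)
    (l : Fin n) (k : Fin d)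
    (hmin : ∀ j, j ≠ l → x l k ≤ x j k) (hstrict : ∃ j, j ≠ l ∧ x l k < x j k) :
    (dLap w ε x l k).IsSymm ∧ (dLap w ε x l k).PosSemidef ∧ dLap w ε x l k ≠ 0 := by
  set a := dAdj w ε x l k with ha
  have hsym : ∀ i j, a i j = a j i := dAdj_symm w ε x l k
  have hnn : ∀ i j, 0 ≤ a i j := dAdj_nonneg ε hw hmin
  have hLsym : (dLap w ε x l k).IsSymm := by
    rw [Matrix.IsSymm]
    ext i j
    simp only [dLap, Matrix.transpose_apply, Matrix.sub_apply, Matrix.diagonal_apply, ← ha]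
    rcases eq_or_ne i j with h | h
    · simp [h]
    · simp [h, Ne.symm h, hsym i j]
  refine ⟨hLsym, Matrix.PosSemidef.of_dotProduct_mulVec_nonneg (by rw [Matrix.IsHermitian]; simpa using hLsym.eq) ?_, ?_⟩
  · -- PSD quadratic form
    intro v
    rw [RCLike.nonneg_iff]
    refine ⟨?_, by simp⟩
    show (0:ℝ) ≤ star v ⬝ᵥ (dLap w ε x l k) *ᵥ v
    have hQ : star v ⬝ᵥ (dLap w ε x l k) *ᵥ v
        = (∑ i, ∑ j, a i j * v i ^ 2) - ∑ i, ∑ j, a i j * (v i * v j) := by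
      simp only [dotProduct, mulVec, dLap, Matrix.sub_apply, ← ha, star_trivial]
      have step : ∀ i : Fin n, v i * (∑ j, (Matrix.diagonal (fun i => ∑ m, a i m) i j - a i j) * v j)
          = (∑ j, a i j * v i ^ 2) - ∑ j, a i j * (v i * v j) := by
        intro i
        have h1 : (∑ j, (Matrix.diagonal (fun i => ∑ m, a i m) i j - a i j) * v j)
            = (∑ m, a i m) * v i - ∑ j, a i j * v j := by
          simp only [Matrix.diagonal_apply, sub_mul, ite_mul, zero_mul,
            Finset.sum_sub_distrib, Finset.sum_ite_eq, Finset.mem_univ, if_true]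
        rw [h1, mul_sub, Finset.sum_mul, Finset.mul_sum, Finset.mul_sum]
        congr 1
        · exact Finset.sum_congr rfl fun j _ => by ring
        · exact Finset.sum_congr rfl fun j _ => by ring
      rw [Finset.sum_congr rfl fun i _ => step i, Finset.sum_sub_distrib]
    have hswap : (∑ i, ∑ j, a i j * v j ^ 2) = ∑ i, ∑ j, a i j * v i ^ 2 := by
      rw [Finset.sum_comm]
      exact Finset.sum_congr rfl fun i _ => Finset.sum_congr rfl fun j _ => by rw [hsym]
    have hexp : (∑ i, ∑ j, a i j * (v i - v j) ^ 2)
        = (∑ i, ∑ j, a i j * v i ^ 2) + (∑ i, ∑ j, a i j * v j ^ 2)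
          - 2 * ∑ i, ∑ j, a i j * (v i * v j) := by
      have : ∀ i : Fin n, (∑ j, a i j * (v i - v j) ^ 2)
          = (∑ j, a i j * v i ^ 2) + (∑ j, a i j * v j ^ 2)
            - 2 * ∑ j, a i j * (v i * v j) := by
        intro i
        rw [Finset.mul_sum, ← Finset.sum_add_distrib, ← Finset.sum_sub_distrib]
        exact Finset.sum_congr rfl fun j _ => by ring
      rw [Finset.sum_congr rfl fun i _ => this i, Finset.mul_sum,
        ← Finset.sum_add_distrib, ← Finset.sum_sub_distrib]
    have hpos : (0:ℝ) ≤ ∑ i, ∑ j, a i j * (v i - v j) ^ 2 :=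
      Finset.sum_nonneg fun i _ => Finset.sum_nonneg fun j _ =>
        mul_nonneg (hnn i j) (sq_nonneg _)
    rw [hQ]
    rw [hswap] at hexp
    linarith
  · -- nonzero: diagonal entry at l is positive
    obtain ⟨j0, hj0, hlt⟩ := hstrict
    have hne : x l ≠ x j0 := fun h => hj0 (hx h).symm
    have hnorm : 0 < ‖x l - x j0‖ := by
      rw [norm_pos_iff]; exact sub_ne_zero.mpr hne
    have haj0 : 0 < a l j0 := by
      rw [ha]
      unfold dAdj
      rw [if_neg (Ne.symm hj0), if_pos rfl]
      apply div_pos _ hnorm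
      have h1 := sigmoidDeriv_pos hw (ε - ‖x l - x j0‖)
      nlinarith
    have hdiag : 0 < dLap w ε x l k l l := by
      have hall : a l l = 0 := by simp [ha, dAdj]
      have : dLap w ε x l k l l = ∑ j, a l j := by
        simp [dLap, ← ha, Matrix.diagonal_apply_eq, hall]
      rw [this]
      exact Finset.sum_pos' (fun j _ => hnn l j) ⟨j0, Finset.mem_univ _, haj0⟩
    intro h
    rw [h] at hdiag
    simp at hdiag
end

section
/- Let g(x) = τ - det(P^T L(x) P) with τ > 0, where L(x) is the sigmoid-weighted Laplacian of n distinct points and P has orthonormal columns orthogonal to 1_n. If g(x) = 0, then ∇g(x) ≠ 0. -/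
open Matrix

/-- Positions extracted from a stacked configuration vector. -/
noncomputable def pos {n d : ℕ} (v : EuclideanSpace ℝ (Fin n × Fin d)) (i : Fin n) :
    EuclideanSpace ℝ (Fin d) := WithLp.toLp 2 (fun k => v (i, k))

noncomputable def lap {n d : ℕ} (w ε : ℝ) (v : EuclideanSpace ℝ (Fin n × Fin d)) :
    Matrix (Fin n) (Fin n) ℝ :=
  Matrix.diagonal
      (fun i => ∑ j, if i = j then 0 else sigmoid w (ε - ‖pos v i - pos v j‖)) -
    Matrix.of (fun i j => if i = j then 0 else sigmoid w (ε - ‖pos v i - pos v j‖))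

/-! ### Auxiliary definitions and lemmas -/

def lapOf {n : ℕ} (w : Fin n → Fin n → ℝ) : Matrix (Fin n) (Fin n) ℝ :=
  Matrix.diagonal (fun i => ∑ j, w i j) - Matrix.of w

lemma lap_eq_lapOf {n d : ℕ} (w ε : ℝ) (v : EuclideanSpace ℝ (Fin n × Fin d)) :
    lap w ε v = lapOf (fun i j => if i = j then 0
      else sigmoid w (ε - ‖pos v i - pos v j‖)) := rfl

lemma quad {n : ℕ} (w : Fin n → Fin n → ℝ) (hs : ∀ i j, w i j = w j i) (x : Fin n → ℝ) :
    x ⬝ᵥ (lapOf w *ᵥ x) = (1/2) * ∑ i, ∑ j, w i j * (x i - x j)^2 := by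
  have hswap : (∑ i, ∑ j, w i j * x j ^ 2) = ∑ i, ∑ j, w i j * x i ^ 2 := by
    rw [Finset.sum_comm]
    exact Finset.sum_congr rfl fun i _ => Finset.sum_congr rfl fun j _ => by rw [hs]
  have hL : x ⬝ᵥ (lapOf w *ᵥ x)
      = (∑ i, ∑ j, w i j * x i ^ 2) - ∑ i, ∑ j, w i j * (x i * x j) := by
    simp only [lapOf, dotProduct, mulVec, Matrix.sub_apply, of_apply,
      diagonal_apply, ite_mul, zero_mul, sub_mul, Finset.sum_sub_distrib,
      Finset.sum_ite_eq, Finset.mem_univ, if_true, mul_sub]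
    congr 1
    · refine Finset.sum_congr rfl fun i _ => ?_
      rw [Finset.sum_mul, Finset.mul_sum]
      exact Finset.sum_congr rfl fun j _ => by ring
    · refine Finset.sum_congr rfl fun i _ => ?_
      rw [Finset.mul_sum]
      exact Finset.sum_congr rfl fun j _ => by ring
  have hR : ∀ i : Fin n, ∑ j, w i j * (x i - x j)^2
      = ((∑ j, w i j * x i ^ 2) - ∑ j, 2 * (w i j * (x i * x j))) + ∑ j, w i j * x j ^ 2 := by
    intro i
    rw [← Finset.sum_sub_distrib, ← Finset.sum_add_distrib]
    exact Finset.sum_congr rfl fun j _ => by ring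
  simp_rw [hR]
  rw [Finset.sum_add_distrib, Finset.sum_sub_distrib, hswap, hL]
  simp_rw [← Finset.mul_sum]
  ring

lemma lapOf_isHermitian {n : ℕ} (w : Fin n → Fin n → ℝ) (hs : ∀ i j, w i j = w j i) :
    (lapOf w).IsHermitian := by
  show (lapOf w)ᴴ = lapOf w
  have : (lapOf w)ᴴ = (lapOf w)ᵀ := rfl
  rw [this, lapOf, transpose_sub, diagonal_transpose]
  congr 1
  ext i j
  exact hs j i

lemma conj_posdef {n : ℕ} (hn : 2 ≤ n) (w : Fin n → Fin n → ℝ)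
    (hs : ∀ i j, w i j = w j i) (hpos : ∀ i j, i ≠ j → 0 < w i j) (hdiag : ∀ i, w i i = 0)
    (P : Matrix (Fin n) (Fin (n - 1)) ℝ)
    (hortho : Pᵀ * P = 1) (hP1 : ∀ j, ∑ i, P i j = 0) :
    (Pᵀ * lapOf w * P).PosDef := by
  have hnn : ∀ i j, 0 ≤ w i j := by
    intro i j
    rcases eq_or_ne i j with rfl | h
    · rw [hdiag]
    · exact (hpos i j h).le
  refine Matrix.PosDef.of_dotProduct_mulVec_pos ?_ ?_
  · exact isHermitian_conjTranspose_mul_mul P (lapOf_isHermitian w hs)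
  · intro x hx
    set y : Fin n → ℝ := P *ᵥ x with hy
    have hval : star x ⬝ᵥ (Pᵀ * lapOf w * P) *ᵥ x = y ⬝ᵥ (lapOf w *ᵥ y) := by
      rw [star_trivial]
      calc x ⬝ᵥ ((Pᵀ * lapOf w * P) *ᵥ x)
          = x ⬝ᵥ (Pᵀ *ᵥ (lapOf w *ᵥ y)) := by rw [← mulVec_mulVec, ← mulVec_mulVec]
        _ = (x ᵥ* Pᵀ) ⬝ᵥ (lapOf w *ᵥ y) := dotProduct_mulVec _ _ _
        _ = y ⬝ᵥ (lapOf w *ᵥ y) := by rw [vecMul_transpose]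
    rw [hval, quad w hs]
    have hterm : ∀ i j : Fin n, 0 ≤ w i j * (y i - y j)^2 :=
      fun i j => mul_nonneg (hnn i j) (sq_nonneg _)
    have hsum : 0 ≤ ∑ i, ∑ j, w i j * (y i - y j)^2 :=
      Finset.sum_nonneg fun i _ => Finset.sum_nonneg fun j _ => hterm i j
    rcases lt_or_eq_of_le hsum with h | h
    · positivity
    exfalso
    have hzero : ∀ i j : Fin n, w i j * (y i - y j)^2 = 0 := by
      intro i j
      have h1 := (Finset.sum_eq_zero_iff_of_nonneg
        (fun i _ => Finset.sum_nonneg fun j _ => hterm i j)).mp h.symm i (Finset.mem_univ i)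
      exact (Finset.sum_eq_zero_iff_of_nonneg (fun j _ => hterm i j)).mp h1 j (Finset.mem_univ j)
    have hconst : ∀ i j : Fin n, y i = y j := by
      intro i j
      rcases eq_or_ne i j with rfl | hij
      · rfl
      · have := hzero i j
        have hw := (hpos i j hij).ne'
        have : (y i - y j)^2 = 0 := by
          rcases mul_eq_zero.mp this with h' | h'
          · exact absurd h' hw
          · exact h'
        have := pow_eq_zero_iff (n := 2) (by norm_num) |>.mp this
        linarith [sub_eq_zero.mp this]
    have hsumy : ∑ i, y i = 0 := by
      simp only [hy, mulVec, dotProduct]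
      rw [Finset.sum_comm]
      simp_rw [← Finset.sum_mul]
      simp only [hP1, zero_mul, Finset.sum_const_zero]
    have hy0 : ∀ i, y i = 0 := by
      intro i
      have : ∑ _j : Fin n, y i = 0 := by
        rw [← hsumy]; exact Finset.sum_congr rfl fun j _ => hconst i j
      rw [Finset.sum_const, Finset.card_univ, Fintype.card_fin, nsmul_eq_mul] at this
      have hn0 : (n : ℝ) ≠ 0 := by
        have : (0:ℝ) < n := by exact_mod_cast (by omega : 0 < n)
        exact this.ne'
      exact (mul_eq_zero.mp this).resolve_left hn0
    have hyz : y = 0 := funext hy0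
    apply hx
    have : (Pᵀ * P) *ᵥ x = Pᵀ *ᵥ y := by rw [← mulVec_mulVec, hy]
    rw [hortho, one_mulVec] at this
    rw [this, hyz, mulVec_zero]

lemma posdef_of_psd {m : Type*} [Fintype m] [DecidableEq m]
    {M : Matrix m m ℝ} (h : M.PosSemidef) (hdet : M.det ≠ 0) : M.PosDef := by
  refine Matrix.PosDef.of_dotProduct_mulVec_pos h.1 fun x hx => ?_
  rcases lt_or_eq_of_le (h.dotProduct_mulVec_nonneg x) with h' | h'
  · exact h'
  exfalso
  have h0 : M *ᵥ x = 0 := (h.dotProduct_mulVec_zero_iff x).mp h'.symm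
  have : x = 0 := by
    have h1 : M⁻¹ * M = 1 := nonsing_inv_mul M (isUnit_iff_ne_zero.mpr hdet)
    calc x = (M⁻¹ * M) *ᵥ x := by rw [h1, one_mulVec]
      _ = M⁻¹ *ᵥ (M *ᵥ x) := by rw [mulVec_mulVec]
      _ = 0 := by rw [h0, mulVec_zero]
  exact hx this

section
open scoped MatrixOrder

lemma trace_mul_posdef {m : Type*} [Fintype m] [DecidableEq m] [Nonempty m]
    {A B : Matrix m m ℝ} (hA : A.PosDef) (hB : B.PosDef) : 0 < (A * B).trace := by
  set C := CFC.sqrt B with hC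
  have hC2 : C * C = B := CFC.sqrt_mul_sqrt_self B (Matrix.nonneg_iff_posSemidef.mpr hB.posSemidef)
  have hCh : Cᵀ = C := (Matrix.nonneg_iff_posSemidef.mp (CFC.sqrt_nonneg B)).isHermitian
  have htr : (A * B).trace = (C * (A * C)).trace := by
    rw [← hC2, ← mul_assoc, trace_mul_comm (A * C) C]
  rw [htr, trace]
  refine Finset.sum_pos (fun i _ => ?_) Finset.univ_nonempty
  have hz : (fun j => C i j) ≠ 0 := by
    intro hzz
    have hBii : B i i = 0 := by
      rw [← hC2, mul_apply]
      refine Finset.sum_eq_zero fun j _ => ?_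
      have : C i j = 0 := congrFun hzz j
      rw [this, zero_mul]
    have hne : (Pi.single i 1 : m → ℝ) ≠ 0 := by
      intro h0
      have := congrFun h0 i
      simp at this
    have hpos := hB.dotProduct_mulVec_pos hne
    have : star (Pi.single i 1 : m → ℝ) ⬝ᵥ B *ᵥ (Pi.single i 1 : m → ℝ) = B i i := by
      rw [star_trivial]
      simp [dotProduct, mulVec, Pi.single_apply]
    rw [this, hBii] at hpos
    exact lt_irrefl 0 hpos
  have hsymm : ∀ a b, C a b = C b a := by
    intro a b
    have := congrFun (congrFun hCh b) a
    rwa [transpose_apply] at this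
  have : (C * (A * C)) i i = star (fun j => C i j) ⬝ᵥ (A *ᵥ fun j => C i j) := by
    rw [star_trivial, mul_apply, dotProduct]
    refine Finset.sum_congr rfl fun j _ => ?_
    rw [mul_apply]
    simp only [mulVec, dotProduct]
    rw [Finset.mul_sum, Finset.mul_sum]
    refine Finset.sum_congr rfl fun k _ => ?_
    rw [hsymm k i]
  rw [diag_apply, this]
  exact hA.dotProduct_mulVec_pos hz

end

lemma hasDerivAt_det {m : Type*} [Fintype m] [DecidableEq m]
    (N : ℝ → Matrix m m ℝ) (N' : Matrix m m ℝ) (t₀ : ℝ)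
    (h : ∀ i j, HasDerivAt (fun t => N t i j) (N' i j) t₀) :
    HasDerivAt (fun t => (N t).det) ((adjugate (N t₀) * N').trace) t₀ := by
  have hfun : (fun t => (N t).det)
      = fun t => ∑ σ : Equiv.Perm m, ((Equiv.Perm.sign σ : ℤ) : ℝ) * ∏ i, N t (σ i) i := by
    funext t
    rw [det_apply']
  have hder : HasDerivAt
      (fun t => ∑ σ : Equiv.Perm m, ((Equiv.Perm.sign σ : ℤ) : ℝ) * ∏ i, N t (σ i) i)
      (∑ σ : Equiv.Perm m, ((Equiv.Perm.sign σ : ℤ) : ℝ) *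
        ∑ i, (∏ j ∈ Finset.univ.erase i, N t₀ (σ j) j) • N' (σ i) i) t₀ := by
    refine HasDerivAt.fun_sum fun σ _ => ?_
    exact (HasDerivAt.fun_finsetProd fun i _ => h (σ i) i).const_mul _
  have heq : (adjugate (N t₀) * N').trace
      = ∑ σ : Equiv.Perm m, ((Equiv.Perm.sign σ : ℤ) : ℝ) *
        ∑ i, (∏ j ∈ Finset.univ.erase i, N t₀ (σ j) j) • N' (σ i) i := by
    have key : ∀ i : m, (adjugate (N t₀) * N') i i
        = ∑ σ : Equiv.Perm m, ((Equiv.Perm.sign σ : ℤ) : ℝ) *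
            ((∏ j ∈ Finset.univ.erase i, N t₀ (σ j) j) * N' (σ i) i) := by
      intro i
      have h1 : (adjugate (N t₀) * N') i i = (adjugate (N t₀) *ᵥ fun r => N' r i) i := by
        rw [mul_apply]; simp [mulVec, dotProduct]
      rw [h1, ← cramer_eq_adjugate_mulVec, cramer_apply, det_apply']
      refine Finset.sum_congr rfl fun σ _ => ?_
      congr 1
      rw [← Finset.mul_prod_erase _ _ (Finset.mem_univ i)]
      rw [updateCol_self]
      have : ∀ j ∈ Finset.univ.erase i,
          ((N t₀).updateCol i fun r => N' r i) (σ j) j = N t₀ (σ j) j := by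
        intro j hj
        rw [updateCol_apply, if_neg (Finset.mem_erase.mp hj).1]
      rw [Finset.prod_congr rfl this]
      ring
    rw [trace]
    simp only [diag_apply]
    rw [Finset.sum_congr rfl fun i _ => key i, Finset.sum_comm]
    refine Finset.sum_congr rfl fun σ _ => ?_
    rw [Finset.mul_sum]
    exact Finset.sum_congr rfl fun i _ => by rw [smul_eq_mul]
  rw [hfun, heq]
  exact hder

lemma lapOf_neg {n : ℕ} (b : Fin n → Fin n → ℝ) :
    lapOf (fun i j => -(b i j)) = -lapOf b := by
  ext i j
  by_cases h : i = j <;> (simp [lapOf, diagonal_apply, h]; try ring)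

lemma entry_deriv {n : ℕ} {κ : Type*} [Fintype κ] (P : Matrix (Fin n) κ ℝ)
    (W : ℝ → Fin n → Fin n → ℝ) (W' : Fin n → Fin n → ℝ) (t₀ : ℝ)
    (hW : ∀ i j, HasDerivAt (fun t => W t i j) (W' i j) t₀) (a b : κ) :
    HasDerivAt (fun t => (Pᵀ * lapOf (W t) * P) a b) ((Pᵀ * lapOf W' * P) a b) t₀ := by
  have hL : ∀ i j, HasDerivAt (fun t => lapOf (W t) i j) (lapOf W' i j) t₀ := by
    intro i j
    simp only [lapOf, Matrix.sub_apply, diagonal_apply, of_apply]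
    by_cases hij : i = j
    · simp only [if_pos hij]
      exact (HasDerivAt.fun_sum fun k _ => hW i k).fun_sub (hW i j)
    · simp only [if_neg hij, zero_sub]
      exact (hW i j).neg
  have hfun : (fun t => (Pᵀ * lapOf (W t) * P) a b)
      = fun t => ∑ j, (∑ i, P i a * lapOf (W t) i j) * P j b := by
    funext t
    simp [mul_apply, transpose_apply]
  have hval : (Pᵀ * lapOf W' * P) a b = ∑ j, (∑ i, P i a * lapOf W' i j) * P j b := by
    simp [mul_apply, transpose_apply]
  rw [hfun, hval]
  exact HasDerivAt.fun_sum fun j _ =>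
    (HasDerivAt.fun_sum fun i _ => (hL i j).const_mul (P i a)).mul_const (P j b)

lemma sigmoid_path_deriv (w ε r : ℝ) :
    HasDerivAt (fun t : ℝ => sigmoid w (ε - (1+t)*r))
      (-(w * r * Real.exp (-w*(ε - r)) / (1 + Real.exp (-w*(ε - r)))^2)) 0 := by
  have h1 : HasDerivAt (fun t : ℝ => (1+t)*r) r 0 := by
    simpa using ((hasDerivAt_id (0:ℝ)).const_add 1).mul_const r
  have h2 : HasDerivAt (fun t : ℝ => ε - (1+t)*r) (-r) 0 := by
    simpa using (hasDerivAt_const (0:ℝ) ε).fun_sub h1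
  have h3 : HasDerivAt (fun t : ℝ => -w * (ε - (1+t)*r)) (-w * -r) 0 := h2.const_mul (-w)
  have h6 := ((h3.exp.const_add 1)).fun_inv (by positivity)
  have hfun : (fun t : ℝ => sigmoid w (ε - (1+t)*r))
      = fun t : ℝ => (1 + Real.exp (-w * (ε - (1+t)*r)))⁻¹ := by
    funext t; rw [sigmoid, one_div]
  rw [hfun]
  refine h6.congr_deriv ?_
  rw [show ((1:ℝ)+0)*r = r by ring]
  field_simp

noncomputable def posDiff (n d : ℕ) (i j : Fin n) :
    EuclideanSpace ℝ (Fin n × Fin d) →L[ℝ] EuclideanSpace ℝ (Fin d) :=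
  LinearMap.toContinuousLinearMap
    { toFun := fun u => pos u i - pos u j
      map_add' := fun u v => by
        ext k
        simp [pos]
        ring
      map_smul' := fun c u => by
        ext k
        simp [pos]
        ring }

lemma posDiff_apply {n d : ℕ} (i j : Fin n) (u : EuclideanSpace ℝ (Fin n × Fin d)) :
    posDiff n d i j u = pos u i - pos u j := rfl

lemma differentiable_sigmoid' (w : ℝ) : Differentiable ℝ (sigmoid w) := by
  have : Differentiable ℝ (fun y : ℝ => (1 + Real.exp (-w * y))⁻¹) := by
    refine Differentiable.inv ?_ fun y => by positivity
    exact (differentiable_const 1).add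
      (Real.differentiable_exp.comp (differentiable_id.const_mul (-w)))
  convert this using 1
  funext y
  rw [sigmoid, one_div]

lemma entry_diffAt {n d : ℕ} (w ε : ℝ)
    (v : EuclideanSpace ℝ (Fin n × Fin d)) (hdist : Function.Injective (pos v))
    (i j : Fin n) :
    DifferentiableAt ℝ (fun u => if i = j then 0
      else sigmoid w (ε - ‖pos u i - pos u j‖)) v := by
  by_cases hij : i = j
  · simp only [if_pos hij]
    exact differentiableAt_const 0
  · simp only [if_neg hij]
    have h0 : posDiff n d i j v ≠ 0 := by
      rw [posDiff_apply, sub_ne_zero]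
      exact fun h => hij (hdist h)
    have hnorm : DifferentiableAt ℝ (fun u => ‖posDiff n d i j u‖) v :=
      DifferentiableAt.norm ℝ ((posDiff n d i j).differentiable.differentiableAt) h0
    have harg : DifferentiableAt ℝ (fun u => ε - ‖posDiff n d i j u‖) v :=
      (differentiableAt_const ε).sub hnorm
    exact ((differentiable_sigmoid' w) _).comp v harg

lemma det_diffAt {E : Type*} [NormedAddCommGroup E] [NormedSpace ℝ E]
    {m : Type*} [Fintype m] [DecidableEq m]
    (A : E → Matrix m m ℝ) (x : E) (h : ∀ i j, DifferentiableAt ℝ (fun u => A u i j) x) :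
    DifferentiableAt ℝ (fun u => (A u).det) x := by
  have hfun : (fun u => (A u).det)
      = fun u => ∑ σ : Equiv.Perm m, ((Equiv.Perm.sign σ : ℤ) : ℝ) * ∏ i, A u (σ i) i := by
    funext u
    rw [det_apply']
  rw [hfun]
  refine DifferentiableAt.fun_sum fun σ _ => DifferentiableAt.const_mul ?_ _
  exact (HasFDerivAt.finset_prod fun i _ => (h (σ i) i).hasFDerivAt).differentiableAt

/-- for `g(x) = τ - det (Pᵀ L(x) P)` with `τ > 0`, distinct positions and `P` with
orthonormal columns orthogonal to the all-ones vector, `g(x) = 0` implies `∇g(x) ≠ 0`. -/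
theorem stmt10 {n d : ℕ} (hn : 2 ≤ n) (w ε τ : ℝ) (hw : 0 < w) (hε : 0 < ε) (hτ : 0 < τ)
    (P : Matrix (Fin n) (Fin (n - 1)) ℝ)
    (hortho : Pᵀ * P = 1) (hP1 : ∀ j, ∑ i, P i j = 0)
    (v : EuclideanSpace ℝ (Fin n × Fin d)) (hdist : Function.Injective (pos v))
    (hg : τ - (Pᵀ * lap w ε v * P).det = 0) :
    gradient (fun u : EuclideanSpace ℝ (Fin n × Fin d) =>
        τ - (Pᵀ * lap w ε u * P).det) v ≠ 0 := by
  classical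
  haveI : Nonempty (Fin (n-1)) := ⟨⟨0, by omega⟩⟩
  set f : EuclideanSpace ℝ (Fin n × Fin d) → ℝ :=
    fun u => τ - (Pᵀ * lap w ε u * P).det with hf
  set r : Fin n → Fin n → ℝ := fun i j => ‖pos v i - pos v j‖ with hr
  have hrsymm : ∀ i j, r i j = r j i := fun i j => norm_sub_rev _ _
  have hrpos : ∀ i j, i ≠ j → 0 < r i j := by
    intro i j hij
    rw [hr]
    simp only [norm_pos_iff, sub_ne_zero]
    exact fun h => hij (hdist h)
  set w0 : Fin n → Fin n → ℝ := fun i j => if i = j then 0 else sigmoid w (ε - r i j) with hw0d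
  set M := Pᵀ * lapOf w0 * P with hM
  have hMlap : Pᵀ * lap w ε v * P = M := rfl
  have hsigpos : ∀ y : ℝ, 0 < sigmoid w y := by
    intro y
    rw [sigmoid]
    positivity
  have hw0symm : ∀ i j, w0 i j = w0 j i := by
    intro i j
    by_cases h : i = j
    · rw [h]
    · simp only [hw0d, if_neg h, if_neg (Ne.symm h), hrsymm i j]
  have hw0pos : ∀ i j, i ≠ j → 0 < w0 i j := by
    intro i j h
    simp only [hw0d, if_neg h]
    exact hsigpos _
  have hMpd : M.PosDef :=
    conj_posdef hn w0 hw0symm hw0pos (fun i => if_pos rfl) P hortho hP1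
  have hdetM : M.det = τ := by
    rw [← hMlap]
    linarith [hg]
  set b : Fin n → Fin n → ℝ := fun i j => if i = j then 0
    else w * r i j * Real.exp (-w*(ε - r i j)) / (1 + Real.exp (-w*(ε - r i j)))^2 with hbd
  have hbsymm : ∀ i j, b i j = b j i := by
    intro i j
    by_cases h : i = j
    · rw [h]
    · simp only [hbd, if_neg h, if_neg (Ne.symm h), hrsymm i j]
  have hbpos : ∀ i j, i ≠ j → 0 < b i j := by
    intro i j h
    simp only [hbd, if_neg h]
    have := hrpos i j h
    positivity
  have hBpd : (Pᵀ * lapOf b * P).PosDef :=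
    conj_posdef hn b hbsymm hbpos (fun i => if_pos rfl) P hortho hP1
  set B := Pᵀ * lapOf b * P with hB
  set T := (adjugate M * B).trace with hT
  have hTpos : 0 < T := by
    have hadj : adjugate M = M.det • M⁻¹ := by
      rw [Matrix.inv_def, smul_smul, Ring.inverse_eq_inv', mul_inv_cancel₀ (by rw [hdetM]; exact hτ.ne'), one_smul]
    rw [hT, hadj, smul_mul_assoc, trace_smul, smul_eq_mul, hdetM]
    exact mul_pos hτ (trace_mul_posdef hMpd.inv hBpd)
  -- the path
  set W : ℝ → Fin n → Fin n → ℝ :=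
    fun t i j => if i = j then 0 else sigmoid w (ε - (1+t) * r i j) with hWd
  have hW0 : lapOf (W 0) = lapOf w0 := by
    congr 1
    funext i j
    by_cases h : i = j
    · simp [hWd, hw0d, h]
    · simp only [hWd, hw0d, if_neg h]
      norm_num
  have hWder : ∀ i j, HasDerivAt (fun t => W t i j) (-(b i j)) 0 := by
    intro i j
    by_cases h : i = j
    · simp only [hWd, hbd, if_pos h, neg_zero]
      exact hasDerivAt_const 0 0
    · simp only [hWd, hbd, if_neg h]
      exact sigmoid_path_deriv w ε (r i j)
  have hN : ∀ a c, HasDerivAt (fun t => (Pᵀ * lapOf (W t) * P) a c)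
      ((Pᵀ * lapOf (fun i j => -(b i j)) * P) a c) 0 :=
    entry_deriv P W _ 0 hWder
  have hdet' : HasDerivAt (fun t => (Pᵀ * lapOf (W t) * P).det)
      ((adjugate (Pᵀ * lapOf (W 0) * P) * (Pᵀ * lapOf (fun i j => -(b i j)) * P)).trace) 0 :=
    hasDerivAt_det (fun t => Pᵀ * lapOf (W t) * P) _ 0 hN
  have hdet2 : HasDerivAt (fun t => τ - (Pᵀ * lapOf (W t) * P).det) T 0 := by
    have h2 := (hasDerivAt_const (0:ℝ) τ).sub hdet'
    refine h2.congr_deriv ?_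
    rw [lapOf_neg, Matrix.mul_neg, Matrix.neg_mul, Matrix.mul_neg, trace_neg, hW0, ← hM, ← hB,
      ← hT]
    ring
  -- eventual equality
  have hsc : ∀ (t:ℝ) (i j : Fin n), pos (v + t • v) i - pos (v + t • v) j
      = (1+t) • (pos v i - pos v j) := by
    intro t i j
    ext k
    simp only [pos, PiLp.sub_apply, PiLp.add_apply, PiLp.smul_apply, smul_eq_mul]
    ring
  have heq : ∀ t ∈ Set.Ioi (-1:ℝ), f (v + t • v) = τ - (Pᵀ * lapOf (W t) * P).det := by
    intro t ht
    have ht' : (0:ℝ) < 1 + t := by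
      have := Set.mem_Ioi.mp ht
      linarith
    have hwt : (fun i j => if i = j then 0
        else sigmoid w (ε - ‖pos (v + t • v) i - pos (v + t • v) j‖)) = W t := by
      funext i j
      by_cases h : i = j
      · simp [hWd, h]
      · simp only [hWd, if_neg h]
        rw [hsc t i j, norm_smul, Real.norm_eq_abs, abs_of_pos ht']
    have hlapt : lap w ε (v + t • v) = lapOf (W t) := by
      rw [lap_eq_lapOf, hwt]
    rw [hf]
    simp only
    rw [hlapt]
  have hee : (fun t => f (v + t • v)) =ᶠ[nhds (0:ℝ)]
      (fun t => τ - (Pᵀ * lapOf (W t) * P).det) :=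
    Filter.eventuallyEq_of_mem (Ioi_mem_nhds (by norm_num : (-1:ℝ) < 0)) heq
  have hpath : HasDerivAt (fun t : ℝ => f (v + t • v)) T 0 :=
    hdet2.congr_of_eventuallyEq hee
  -- differentiability of f at v
  have hlapdiff : ∀ i j, DifferentiableAt ℝ (fun u => lap w ε u i j) v := by
    intro i j
    have hfun : (fun u : EuclideanSpace ℝ (Fin n × Fin d) => lap w ε u i j)
        = fun u : EuclideanSpace ℝ (Fin n × Fin d) => (if i = j
            then (∑ k, if i = k then 0 else sigmoid w (ε - ‖pos u i - pos u k‖)) else 0)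
          - (if i = j then 0 else sigmoid w (ε - ‖pos u i - pos u j‖)) := by
      funext u
      rw [lap]
      rw [Matrix.sub_apply, diagonal_apply, of_apply]
    rw [hfun]
    by_cases h : i = j
    · simp only [if_pos h]
      exact (DifferentiableAt.fun_sum fun k _ => entry_diffAt w ε v hdist i k).sub
        (differentiableAt_const 0)
    · simp only [if_neg h]
      have h2 := entry_diffAt w ε v hdist i j
      simp only [if_neg h] at h2
      exact (differentiableAt_const 0).sub h2
  have hentry : ∀ a c, DifferentiableAt ℝ (fun u => (Pᵀ * lap w ε u * P) a c) v := by
    intro a c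
    have hfun : (fun u : EuclideanSpace ℝ (Fin n × Fin d) => (Pᵀ * lap w ε u * P) a c)
        = fun u : EuclideanSpace ℝ (Fin n × Fin d) =>
            ∑ j, (∑ i, P i a * lap w ε u i j) * P j c := by
      funext u
      simp [mul_apply, transpose_apply]
    rw [hfun]
    exact DifferentiableAt.fun_sum fun j _ =>
      (DifferentiableAt.fun_sum fun i _ =>
        (hlapdiff i j).const_mul (P i a)).mul_const (P j c)
  have hfd : DifferentiableAt ℝ f v :=
    (differentiableAt_const τ).sub (det_diffAt (fun u => Pᵀ * lap w ε u * P) v hentry)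
  -- chain rule
  have hγ : HasDerivAt (fun t : ℝ => v + t • v) v 0 := by
    have h1 : HasDerivAt (fun t : ℝ => t • v) v 0 := by
      simpa using (hasDerivAt_id (0:ℝ)).smul_const v
    simpa using h1.const_add v
  have hcomp : HasDerivAt (fun t : ℝ => f (v + t • v)) (fderiv ℝ f v v) 0 := by
    have h0 : v + (0:ℝ) • v = v := by simp
    have h1 : HasFDerivAt f (fderiv ℝ f v) (v + (0:ℝ) • v) := by
      rw [h0]; exact hfd.hasFDerivAt
    have h2 := HasFDerivAt.comp_hasDerivAt 0 h1 hγ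
    exact h2
  have hTval : fderiv ℝ f v v = T := hcomp.unique hpath
  intro hgrad
  have hkey : (InnerProductSpace.toDual ℝ (EuclideanSpace ℝ (Fin n × Fin d)))
      (gradient f v) = fderiv ℝ f v :=
    LinearIsometryEquiv.apply_symm_apply _ _
  have hfz : fderiv ℝ f v = 0 := by
    rw [← hkey, hgrad, map_zero]
  rw [hfz] at hTval
  simp only [ContinuousLinearMap.zero_apply] at hTval
  exact absurd hTval.symm hTpos.ne'
end
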